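/- Let G be a finite group with a normal p'-subgroup K, and let p, q be distinct primes. If G/K has a Sylow p-subgroup that normalizes a Sylow q-subgroup of G/K, then G has a Sylow p-subgroup that normalizes a Sylow q-subgroup of G. -/

import Mathlib

open Subgroup

lemma aux_index_not_dvd {L : Type*} [Group L] [Finite L] {p : ℕ} (hp : p.Prime)
    {R M : Subgroup L} [M.Normal] (hsup : R ⊔ M = ⊤) (hM : ¬ p ∣ Nat.card M) :
    ¬ p ∣ R.index := by
  set a := (Nat.card L).factorization p with ha
  have hL : Nat.card L ≠ 0 := Nat.card_pos.ne'
  have hsurj : Function.Surjective ((QuotientGroup.mk' M).domRestrict R) := by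
    intro z
    obtain ⟨l, rfl⟩ := QuotientGroup.mk'_surjective M z
    have hl : l ∈ R ⊔ M := hsup ▸ mem_top l
    rw [← SetLike.mem_coe, Subgroup.mul_normal] at hl
    obtain ⟨r, hr, m, hm, rfl⟩ := hl
    refine ⟨⟨r, hr⟩, ?_⟩
    simp only [MonoidHom.domRestrict_apply, QuotientGroup.mk'_apply]
    exact (QuotientGroup.mk_mul_of_mem r hm).symm
  have h1 : Nat.card (L ⧸ M) ∣ Nat.card R :=
    Subgroup.card_dvd_of_surjective _ hsurj
  have hcard : Nat.card L = Nat.card (L ⧸ M) * Nat.card M :=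
    Subgroup.card_eq_card_quotient_mul_card_subgroup M
  have h2 : p ^ a ∣ Nat.card (L ⧸ M) := by
    have hd : p ^ a ∣ Nat.card L := Nat.ordProj_dvd _ _
    rw [hcard] at hd
    exact ((Nat.Coprime.pow_left a (hp.coprime_iff_not_dvd.mpr hM))).dvd_of_dvd_mul_right hd
  have h3 : p ^ a ∣ Nat.card R := h2.trans h1
  intro hdvd
  have : p ^ (a + 1) ∣ Nat.card L := by
    rw [← R.card_mul_index, pow_succ]
    exact mul_dvd_mul h3 hdvd
  exact Nat.pow_succ_factorization_not_dvd hL hp this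

lemma aux_fact_eq {G : Type*} [Group G] [Finite G] {p : ℕ} (H : Subgroup G)
    (h : ¬ p ∣ H.index) :
    (Nat.card H).factorization p = (Nat.card G).factorization p := by
  rw [← H.card_mul_index, Nat.factorization_mul Nat.card_pos.ne'
    (Subgroup.index_ne_zero_of_finite), Finsupp.add_apply,
    Nat.factorization_eq_zero_of_not_dvd h, add_zero]

lemma aux_sylow_map {G : Type*} [Group G] [Finite G] {p : ℕ} [Fact p.Prime]
    {H : Subgroup G} (h : ¬ p ∣ H.index) (P : Sylow p H) :
    ∃ P' : Sylow p G, (P' : Subgroup G) = Subgroup.map H.subtype P := by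
  have hpg : IsPGroup p (Subgroup.map H.subtype (P : Subgroup H)) :=
    P.2.map _
  obtain ⟨P', hP'⟩ := hpg.exists_le_sylow
  refine ⟨P', (Subgroup.eq_of_le_of_card_ge hP' ?_).symm⟩
  have e1 : Nat.card (Subgroup.map H.subtype (P : Subgroup H)) = Nat.card P :=
    (Nat.card_congr ((P : Subgroup H).equivMapOfInjective H.subtype
      H.subtype_injective).toEquiv).symm
  rw [e1, P.card_eq_multiplicity, P'.card_eq_multiplicity, aux_fact_eq H h]

theorem stmt4 {G : Type*} [Group G] [Finite G] (p q : ℕ) [Fact p.Prime] [Fact q.Prime]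
    (hpq : p ≠ q) (K : Subgroup G) [K.Normal] (hK : Nat.Coprime (Nat.card K) p)
    (h : ∃ (P' : Sylow p (G ⧸ K)) (Q' : Sylow q (G ⧸ K)),
      (P' : Subgroup (G ⧸ K)) ≤ Subgroup.normalizer ((Q' : Subgroup (G ⧸ K)) : Set (G ⧸ K))) :
    ∃ (P : Sylow p G) (Q : Sylow q G),
      (P : Subgroup G) ≤ Subgroup.normalizer ((Q : Subgroup G) : Set G) := by
  obtain ⟨P', Q', hPQ'⟩ := h
  have hp : p.Prime := Fact.out
  set π : G →* G ⧸ K := QuotientGroup.mk' K with hπdef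
  have hπ : Function.Surjective π := QuotientGroup.mk'_surjective K
  -- lift Q' to a Sylow q-subgroup Q of G
  obtain ⟨Q, hQ⟩ := Sylow.mapSurjective_surjective hπ q Q'
  have hQmap : Subgroup.map π (Q : Subgroup G) = (Q' : Subgroup (G ⧸ K)) := by
    rw [← Sylow.coe_mapSurjective hπ Q, hQ]
  set M : Subgroup G := (Q' : Subgroup (G ⧸ K)).comap π with hMdef
  have hQM : (Q : Subgroup G) ≤ M := map_le_iff_le_comap.mp hQmap.le
  set N : Subgroup G := Subgroup.normalizer (M : Set G) with hNdef
  have hMN : M ≤ N := le_normalizer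
  have hQN : (Q : Subgroup G) ≤ N := hQM.trans hMN
  -- p does not divide card M
  have hpM : ¬ p ∣ Nat.card M := by
    intro hdvd
    obtain ⟨x, hx⟩ := exists_prime_orderOf_dvd_card' p hdvd
    have hxG : orderOf (x : G) = p := by
      rw [← hx]; exact orderOf_injective M.subtype M.subtype_injective x
    have hxQ' : π (x : G) ∈ (Q' : Subgroup (G ⧸ K)) := x.2
    have hord : orderOf (π (x : G)) ∣ p := hxG ▸ orderOf_map_dvd π (x : G)
    rcases (Nat.dvd_prime hp).mp hord with h1 | h1
    · -- π x = 1, so x ∈ K, so p ∣ card K, contradiction with coprimality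
      have hxK : (x : G) ∈ K := by
        have : π (x : G) = 1 := orderOf_eq_one_iff.mp h1
        rwa [← QuotientGroup.ker_mk' K, MonoidHom.mem_ker]
      have : p ∣ Nat.card K := by
        rw [← hxG]
        exact Subgroup.orderOf_dvd_natCard K hxK
      exact hp.one_lt.ne' (Nat.eq_one_of_dvd_coprimes hK this (dvd_refl p))
    · -- element of order p in the q-group Q'
      obtain ⟨k, hk⟩ := Q'.2 ⟨π (x : G), hxQ'⟩
      have : orderOf (⟨π (x : G), hxQ'⟩ : (Q' : Subgroup (G ⧸ K))) ∣ q ^ k :=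
        orderOf_dvd_of_pow_eq_one hk
      have horder : orderOf (π (x : G)) ∣ q ^ k := by
        rwa [Subgroup.orderOf_mk] at this
      rw [h1] at horder
      exact hpq ((Nat.prime_dvd_prime_iff_eq hp Fact.out).mp (hp.dvd_of_dvd_pow horder))
  -- p does not divide the index of N
  have hpN : ¬ p ∣ N.index := by
    have e1 : N = (Subgroup.normalizer ((Q' : Subgroup (G ⧸ K)) : Set (G ⧸ K))).comap π :=
      (comap_normalizer_eq_of_surjective _ hπ).symm
    rw [e1, index_comap_of_surjective _ hπ]
    intro hdvd
    exact P'.not_dvd_index (hdvd.trans (index_dvd_of_le hPQ'))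
  -- Frattini inside N
  letI : (M.subgroupOf N).Normal := normal_in_normalizer
  set QN : Sylow q N := Q.subtype hQN with hQNdef
  have hQNM : (QN : Subgroup N) ≤ M.subgroupOf N := by
    rw [hQNdef, Q.coe_subtype]
    exact fun x hx => hQM hx
  have frattini : Subgroup.normalizer ((QN : Subgroup N) : Set N) ⊔ M.subgroupOf N = ⊤ :=
    Sylow.normalizer_sup_eq_top' QN hQNM
  set R : Subgroup N := Subgroup.normalizer ((QN : Subgroup N) : Set N) with hRdef
  -- p does not divide the index of R in N
  have hpMN : ¬ p ∣ Nat.card (M.subgroupOf N) := by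
    rwa [Nat.card_congr (Subgroup.subgroupOfEquivOfLe hMN).toEquiv]
  have hpR : ¬ p ∣ R.index := aux_index_not_dvd hp frattini hpMN
  -- R mapped into G
  set RG : Subgroup G := R.map N.subtype with hRGdef
  have hpRG : ¬ p ∣ RG.index := by
    rw [hRGdef, index_map_subtype]
    exact hp.not_dvd_mul hpR hpN
  obtain ⟨P, hP⟩ := aux_sylow_map hpRG (Classical.arbitrary (Sylow p RG))
  refine ⟨P, Q, ?_⟩
  have hPRG : (P : Subgroup G) ≤ RG := by
    rw [hP]; exact map_subtype_le _
  intro x hx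
  have hxRG := hPRG hx
  rw [hRGdef, mem_map] at hxRG
  obtain ⟨y, hy, rfl⟩ := hxRG
  rw [mem_normalizer_iff]
  intro g
  rw [hRdef, mem_normalizer_iff] at hy
  constructor
  · intro hg
    have hgN : g ∈ N := hQN hg
    have := (hy ⟨g, hgN⟩).mp (by rwa [hQNdef, Q.coe_subtype, mem_subgroupOf])
    rw [hQNdef, Q.coe_subtype, mem_subgroupOf] at this
    exact this
  · intro hg
    have hgN : g ∈ N := by
      have h1 : (y : G) * g * (y : G)⁻¹ ∈ N := hQN hg
      have := N.mul_mem (N.mul_mem (N.inv_mem y.2) h1) y.2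
      simpa [mul_assoc] using this
    have := (hy ⟨g, hgN⟩).mpr (by rwa [hQNdef, Q.coe_subtype, mem_subgroupOf])
    rw [hQNdef, Q.coe_subtype, mem_subgroupOf] at this
    exact this
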